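/- For a simplicial object A in a semi-abelian category, H₀A = 0 if and only if the morphism (∂₀, ∂₁) : A₁ → A₀ × A₀ is a regular epimorphism. -/

import Mathlib

universe w v u
noncomputable section
open CategoryTheory CategoryTheory.Limits CategoryTheory.Subobject Opposite Simplicial

namespace SemiAbPaper
section Base


variable {C : Type u} [Category.{v} C]

/-- A regular epimorphism (propositional form). -/
def IsRegEpi {X Y : C} (f : X ⟶ Y) : Prop := Nonempty (RegularEpi f)

/-- A regular projective object. -/
def RegularProjective (P : C) : Prop :=
  ∀ {X Y : C} (e : X ⟶ Y), IsRegEpi e → ∀ g : P ⟶ Y, ∃ h : P ⟶ X, h ≫ e = g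

/-- `C` has enough regular projectives. -/
def EnoughRegularProjectives (C : Type u) [Category.{v} C] : Prop :=
  ∀ X : C, ∃ (P : C) (p : P ⟶ X), RegularProjective P ∧ IsRegEpi p

/-- A regular category: finitely complete, coequalizers of kernel pairs,
regular epimorphisms stable under pullback. -/
class IsRegularCategory (C : Type u) [Category.{v} C] [HasFiniteLimits C] : Prop where
  hasCoequalizersOfKernelPairs :
    ∀ {X Y : C} (f : X ⟶ Y), HasColimit (parallelPair (pullback.fst f f) (pullback.snd f f))
  regularEpiPullbackStable :
    ∀ {X Y Z : C} (f : X ⟶ Y) (g : Z ⟶ Y), IsRegEpi f → IsRegEpi (pullback.snd f g)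

/-- A semi-abelian category (relative to ambient pointedness and finite completeness):
Barr-exact, Bourn-protomodular, with binary coproducts and a zero object. -/
class IsSemiAbelian (C : Type u) [Category.{v} C] [HasZeroMorphisms C] [HasFiniteLimits C] :
    Prop where
  hasZeroObject : HasZeroObject C
  hasBinaryCoproducts : HasBinaryCoproducts C
  hasCoequalizersOfKernelPairs :
    ∀ {X Y : C} (f : X ⟶ Y), HasColimit (parallelPair (pullback.fst f f) (pullback.snd f f))
  regularEpiPullbackStable :
    ∀ {X Y Z : C} (f : X ⟶ Y) (g : Z ⟶ Y), IsRegEpi f → IsRegEpi (pullback.snd f g)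
  /-- Barr-exactness: every internal equivalence relation is a kernel pair. -/
  exactEquivalenceRelations :
    ∀ {R X : C} (r₀ r₁ : R ⟶ X),
      (∀ {T : C} (a b : T ⟶ R), a ≫ r₀ = b ≫ r₀ → a ≫ r₁ = b ≫ r₁ → a = b) →
      (∀ T : C, _root_.Equivalence fun x y : T ⟶ X => ∃ t : T ⟶ R, t ≫ r₀ = x ∧ t ≫ r₁ = y) →
      ∃ (Y : C) (f : X ⟶ Y), IsKernelPair f r₀ r₁
  /-- Bourn-protomodularity: the Short Five Lemma. -/
  protomodular :
    ∀ {E' B' E B : C} (p' : E' ⟶ B') (p : E ⟶ B), IsRegEpi p' → IsRegEpi p →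
      ∀ (v : E' ⟶ E) (w : B' ⟶ B), p' ≫ w = v ≫ p →
      ∀ u : kernel p' ⟶ kernel p, u ≫ kernel.ι p = kernel.ι p' ≫ v →
      IsIso u → IsIso w → IsIso v


end Base

section MoorePart

variable {C : Type u} [Category.{v} C] [HasZeroMorphisms C] [HasFiniteLimits C]

namespace Moore

variable (X : SimplicialObject C)

/-- The `n`-th object of the Moore complex of `X`:
the intersection of the kernels of `∂ᵢ : Xₙ ⟶ X_{n-1}` for `0 ≤ i ≤ n-1`. -/
def NSub : ∀ n : ℕ, Subobject (X _⦋n⦌) := fun n => match n with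
  | 0 => ⊤
  | n + 1 => Finset.univ.inf fun k : Fin (n + 1) => kernelSubobject (X.δ k.castSucc)

/-- The `n`-th object of the Moore complex, as an object of `C`. -/
def NObj (n : ℕ) : C := (NSub X n : C)

theorem arrow_comp_δ_castSucc (n : ℕ) (i : Fin (n + 1)) :
    (NSub X (n + 1)).arrow ≫ X.δ i.castSucc = 0 := by
  show (Finset.univ.inf fun k : Fin (n + 1) =>
      kernelSubobject (X.δ k.castSucc)).arrow ≫ X.δ i.castSucc = 0
  rw [← factorThru_arrow _ _ (finset_inf_arrow_factors Finset.univ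
      (fun k : Fin (n + 1) => kernelSubobject (X.δ k.castSucc)) i (Finset.mem_univ _)),
    Category.assoc, kernelSubobject_arrow_comp, comp_zero]

/-- The differential `dₙ₊₁ : Nₙ₊₁X ⟶ NₙX` of the Moore complex, induced by the
last face `∂ₙ₊₁`. -/
def MooreD : ∀ n : ℕ, NObj X (n + 1) ⟶ NObj X n := fun n => match n with
  | 0 => (NSub X 1).arrow ≫ X.δ (Fin.last 1) ≫ @inv _ _ _ _ (⊤ : Subobject (X _⦋0⦌)).arrow Subobject.top_arrow_isIso
  | n + 1 =>
    factorThru _ ((NSub X (n + 2)).arrow ≫ X.δ (Fin.last (n + 2))) (by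
      refine (finset_inf_factors _).mpr fun i _ => ?_
      apply kernelSubobject_factors
      show ((NSub X (n + 2)).arrow ≫ X.δ (Fin.last (n + 2))) ≫ X.δ i.castSucc = 0
      rw [Category.assoc,
        show X.δ (Fin.last (n + 2)) = X.δ ((Fin.last (n + 1)).succ) from by rw [Fin.succ_last],
        X.δ_comp_δ (Fin.le_last i.castSucc), ← Category.assoc,
        arrow_comp_δ_castSucc, zero_comp])

theorem d_squared (n : ℕ) : MooreD X (n + 1) ≫ MooreD X n = 0 := by
  rcases n with _ | n <;> dsimp [MooreD]
  · erw [factorThru_arrow_assoc,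
      show X.δ (Fin.last 2) = X.δ ((Fin.last 1).succ) from by erw [Fin.succ_last],
      Category.assoc, X.δ_comp_δ_assoc (le_refl (Fin.last 1)), ← Category.assoc,
      arrow_comp_δ_castSucc, zero_comp]
  · apply (cancel_mono (NSub X (n + 1)).arrow).1
    erw [Category.assoc, factorThru_arrow, factorThru_arrow_assoc,
      show X.δ (Fin.last (n + 3)) = X.δ ((Fin.last (n + 2)).succ) from by erw [Fin.succ_last],
      Category.assoc, X.δ_comp_δ (le_refl (Fin.last (n + 2))), ← Category.assoc,
      arrow_comp_δ_castSucc, zero_comp, zero_comp]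

variable [HasCokernels C]

/-- The homology `HₙX` of the Moore complex of `X`:
the cokernel of the factorization of `dₙ₊₁` through the kernel of `dₙ`. -/
def H : ℕ → C := fun n => match n with
  | 0 => cokernel (MooreD X 0)
  | n + 1 => cokernel (kernel.lift (MooreD X n) (MooreD X (n + 1)) (d_squared X n))

/-- The object of `n`-cycles `ZₙX = ⋂_{i ∈ [n]} K[∂ᵢ]`
(realized as `X₀` for `n = 0` and as the kernel of `dₙ` for `n ≥ 1`). -/
def Z : ℕ → C := fun n => match n with
  | 0 => X _⦋0⦌
  | n + 1 => kernel (MooreD X n)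

/-- The monomorphism `ZₙX ⟶ Xₙ`. -/
def zArrow : ∀ n : ℕ, Z X n ⟶ X _⦋n⦌ := fun n => match n with
  | 0 => 𝟙 _
  | n + 1 => kernel.ι (MooreD X n) ≫ (NSub X (n + 1)).arrow

/-- The canonical quotient map `qₙ : ZₙX ⟶ HₙX`. -/
def q : ∀ n : ℕ, Z X n ⟶ H X n := fun n => match n with
  | 0 => @inv _ _ _ _ (⊤ : Subobject (X _⦋0⦌)).arrow Subobject.top_arrow_isIso ≫ cokernel.π (MooreD X 0)
  | n + 1 => cokernel.π (kernel.lift (MooreD X n) (MooreD X (n + 1)) (d_squared X n))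

end Moore

end MoorePart

section NablaPart

variable {C : Type u} [Category.{v} C] [HasFiniteLimits C]

namespace Nabla

/-- Pairs `i < j` in `[n+2]`. -/
def PairIdx (n : ℕ) : Type := {p : Fin (n + 3) × Fin (n + 3) // p.1 < p.2}

instance (n : ℕ) : Fintype (PairIdx n) := by unfold PairIdx; infer_instance

variable (X : SimplicialObject C)

/-- The object `∇ₙX` of `n`-cycles: `∇₀X = X₀ × X₀`, and for `n ≥ 1`, the subobject of
`Xₙ^{n+2}` of tuples `(x₀, …, x_{n+1})` with `∂ᵢ ∘ xⱼ = ∂_{j-1} ∘ xᵢ` for `i < j` in `[n+1]`. -/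
def obj : ℕ → C := fun n => match n with
  | 0 => Limits.prod (X _⦋0⦌) (X _⦋0⦌)
  | n + 1 =>
    equalizer
      (Pi.lift fun p : PairIdx n =>
        Pi.π (fun _ : Fin (n + 3) => X _⦋n + 1⦌) p.1.2 ≫
          X.δ (⟨p.1.1, by
            have h1 : (p.1.1 : ℕ) < (p.1.2 : ℕ) := p.2
            have h2 : (p.1.2 : ℕ) < n + 3 := p.1.2.isLt
            omega⟩ : Fin (n + 2)))
      (Pi.lift fun p : PairIdx n =>
        Pi.π (fun _ : Fin (n + 3) => X _⦋n + 1⦌) p.1.1 ≫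
          X.δ (⟨(p.1.2 : ℕ) - 1, by
            have h2 : (p.1.2 : ℕ) < n + 3 := p.1.2.isLt
            omega⟩ : Fin (n + 2)))

/-- The projection `prᵢ : ∇ₙX ⟶ Xₙ`. -/
def pr : ∀ (n : ℕ) (_ : Fin (n + 2)), obj X n ⟶ X _⦋n⦌ := fun n i => match n, i with
  | 0, i => if i = 0 then Limits.prod.fst else Limits.prod.snd
  | n + 1, i => equalizer.ι _ _ ≫ Pi.π (fun _ : Fin (n + 3) => X _⦋n + 1⦌) i

/-- The object `∇ₙ(X⁻)`, where `X⁻` is the shifted simplicial object with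
`(X⁻)ₙ = X_{n+1}` and `∂ᵢ⁻ = ∂_{i+1}`. -/
def shiftObj : ℕ → C := fun n => match n with
  | 0 => Limits.prod (X _⦋1⦌) (X _⦋1⦌)
  | n + 1 =>
    equalizer
      (Pi.lift fun p : PairIdx n =>
        Pi.π (fun _ : Fin (n + 3) => X _⦋n + 2⦌) p.1.2 ≫
          X.δ (⟨(p.1.1 : ℕ) + 1, by
            have h1 : (p.1.1 : ℕ) < (p.1.2 : ℕ) := p.2
            have h2 : (p.1.2 : ℕ) < n + 3 := p.1.2.isLt
            omega⟩ : Fin (n + 3)))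
      (Pi.lift fun p : PairIdx n =>
        Pi.π (fun _ : Fin (n + 3) => X _⦋n + 2⦌) p.1.1 ≫
          X.δ (⟨(p.1.2 : ℕ), by
            have h2 : (p.1.2 : ℕ) < n + 3 := p.1.2.isLt
            omega⟩ : Fin (n + 3)))

/-- The projection `prᵢ : ∇ₙ(X⁻) ⟶ X_{n+1}`. -/
def shiftPr : ∀ (n : ℕ) (_ : Fin (n + 2)), shiftObj X n ⟶ X _⦋n + 1⦌ := fun n i => match n, i with
  | 0, i => if i = 0 then Limits.prod.fst else Limits.prod.snd
  | n + 1, i => equalizer.ι _ _ ≫ Pi.π (fun _ : Fin (n + 3) => X _⦋n + 2⦌) i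

end Nabla

end NablaPart

section HornPart

variable {C : Type u} [Category.{v} C]


/-- An `(n+1, k)`-horn of a simplicial object `A` with vertex of definition `X`:
a family `xᵢ : X ⟶ Aₙ` (`i ≠ k`) with `∂ᵢ ∘ xⱼ = ∂_{j-1} ∘ xᵢ` for `i < j`, `i, j ≠ k`. -/
structure HornData (A : SimplicialObject C) (n : ℕ) (k : Fin (n + 2)) (X : C) where
  x : ∀ i : Fin (n + 2), i ≠ k → (X ⟶ A _⦋n⦌)
  compat : ∀ (m : ℕ) (hm : n = m + 1) (i j : Fin (n + 2)) (hi : i ≠ k) (hj : j ≠ k)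
      (hij : (i : ℕ) < (j : ℕ)),
      x j hj ≫ eqToHom (by rw [hm]) ≫ A.δ (⟨(i : ℕ), by
          have := j.isLt; omega⟩ : Fin (m + 2)) =
      x i hi ≫ eqToHom (by rw [hm]) ≫ A.δ (⟨(j : ℕ) - 1, by
          have := j.isLt; omega⟩ : Fin (m + 2))

/-- `A` is Kan (internally, up to regular epimorphism). -/
def IsKanObject (A : SimplicialObject C) : Prop :=
  ∀ (n : ℕ) (k : Fin (n + 2)) (X : C) (h : HornData A n k X),
    ∃ (Y : C) (p : Y ⟶ X), IsRegEpi p ∧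
      ∃ a : Y ⟶ A _⦋n + 1⦌, ∀ (i : Fin (n + 2)) (hi : i ≠ k), a ≫ A.δ i = p ≫ h.x i hi

/-- `f : A ⟶ B` is a Kan fibration (internally, up to regular epimorphism). -/
def IsKanFibration {A B : SimplicialObject C} (f : A ⟶ B) : Prop :=
  ∀ (n : ℕ) (k : Fin (n + 2)) (X : C) (h : HornData A n k X) (b : X ⟶ B _⦋n + 1⦌),
    (∀ (i : Fin (n + 2)) (hi : i ≠ k), b ≫ B.δ i = h.x i hi ≫ f.app (op ⦋n⦌)) →
    ∃ (Y : C) (p : Y ⟶ X), IsRegEpi p ∧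
      ∃ a : Y ⟶ A _⦋n + 1⦌, a ≫ f.app (op ⦋n + 1⦌) = p ≫ b ∧
        ∀ (i : Fin (n + 2)) (hi : i ≠ k), a ≫ A.δ i = p ≫ h.x i hi

/-- A simplicial set (simplicial object of `Type`) is a Kan complex. -/
def IsKanSSet (K : SimplicialObject (Type w)) : Prop :=
  ∀ (n : ℕ) (k : Fin (n + 2)) (x : ∀ i : Fin (n + 2), i ≠ k → K _⦋n⦌),
    (∀ (m : ℕ) (hm : n = m + 1) (i j : Fin (n + 2)) (hi : i ≠ k) (hj : j ≠ k)
      (hij : (i : ℕ) < (j : ℕ)),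
      K.δ (⟨(i : ℕ), by have := j.isLt; omega⟩ : Fin (m + 2)) (_root_.cast (show K _⦋n⦌ = K _⦋m+1⦌ by rw [hm]) (x j hj)) =
      K.δ (⟨(j : ℕ) - 1, by have := j.isLt; omega⟩ : Fin (m + 2))
        (_root_.cast (show K _⦋n⦌ = K _⦋m+1⦌ by rw [hm]) (x i hi))) →
    ∃ y : K _⦋n + 1⦌, ∀ (i : Fin (n + 2)) (hi : i ≠ k), K.δ i y = x i hi

/-- A map of simplicial sets is a Kan fibration. -/
def IsKanFibrationSSet {K L : SimplicialObject (Type w)} (g : K ⟶ L) : Prop :=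
  ∀ (n : ℕ) (k : Fin (n + 2)) (x : ∀ i : Fin (n + 2), i ≠ k → K _⦋n⦌),
    (∀ (m : ℕ) (hm : n = m + 1) (i j : Fin (n + 2)) (hi : i ≠ k) (hj : j ≠ k)
      (hij : (i : ℕ) < (j : ℕ)),
      K.δ (⟨(i : ℕ), by have := j.isLt; omega⟩ : Fin (m + 2)) (_root_.cast (show K _⦋n⦌ = K _⦋m+1⦌ by rw [hm]) (x j hj)) =
      K.δ (⟨(j : ℕ) - 1, by have := j.isLt; omega⟩ : Fin (m + 2))
        (_root_.cast (show K _⦋n⦌ = K _⦋m+1⦌ by rw [hm]) (x i hi))) →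
    ∀ b : L _⦋n + 1⦌,
      (∀ (i : Fin (n + 2)) (hi : i ≠ k), L.δ i b = g.app (op ⦋n⦌) (x i hi)) →
      ∃ a : K _⦋n + 1⦌, g.app (op ⦋n + 1⦌) a = b ∧
        ∀ (i : Fin (n + 2)) (hi : i ≠ k), K.δ i a = x i hi

/-- The simplicial set `hom(P, A)`. -/
def homSimplicial (P : C) (A : SimplicialObject C) : SimplicialObject (Type v) :=
  A ⋙ coyoneda.obj (op P)

/-- The map of simplicial sets `hom(P, f)`. -/
def homSimplicialMap (P : C) {A B : SimplicialObject C} (f : A ⟶ B) :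
    homSimplicial P A ⟶ homSimplicial P B :=
  Functor.whiskerRight f (coyoneda.obj (op P))


end HornPart

section SSetPart


variable {K L : SimplicialObject (Type w)}

/-- The iterated degeneracy `σ₀ⁿ(x)` of a vertex `x`. -/
def bpt (K : SimplicialObject (Type w)) (x : K _⦋0⦌) : ∀ n : ℕ, K _⦋n⦌ := fun n => match n with
  | 0 => x
  | n + 1 => K.σ (0 : Fin (n + 1)) (bpt K x n)

/-- `Zₙ(K, x)`: the `n`-simplices all of whose faces are the basepoint. -/
def SZ (K : SimplicialObject (Type w)) (x : K _⦋0⦌) : ℕ → Type w := fun n => match n with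
  | 0 => K _⦋0⦌
  | n + 1 => { z : K.obj (op (SimplexCategory.mk (n + 1))) // ∀ i : Fin (n + 2), K.δ i z = bpt K x n }

/-- The underlying `n`-simplex of an element of `Zₙ(K, x)`. -/
def szVal {K : SimplicialObject (Type w)} {x : K _⦋0⦌} : ∀ {n : ℕ}, SZ K x n → K _⦋n⦌ := fun {n} z => match n, z with
  | 0, z => z
  | _ + 1, z => z.1

/-- The homotopy relation on `Zₙ(K, x)`: `z ∼ z'` iff there is `y ∈ K_{n+1}` with
`∂ᵢ(y) = x` for `i < n`, `∂ₙ(y) = z` and `∂_{n+1}(y) = z'`. -/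
def hRel (K : SimplicialObject (Type w)) (x : K _⦋0⦌) (n : ℕ) (z z' : SZ K x n) : Prop :=
  ∃ y : K _⦋n + 1⦌,
    (∀ i : Fin (n + 2), (i : ℕ) < n → K.δ i y = bpt K x n) ∧
    K.δ (⟨n, by omega⟩ : Fin (n + 2)) y = szVal z ∧
    K.δ (Fin.last (n + 1)) y = szVal z'

/-- The homotopy "group" `πₙ(K, x)` as a quotient set. -/
def piSet (K : SimplicialObject (Type w)) (x : K _⦋0⦌) (n : ℕ) : Type w :=
  Quot (hRel K x n)

theorem δ_app (g : K ⟶ L) {n : ℕ} (i : Fin (n + 2)) (z : K _⦋n + 1⦌) :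
    L.δ i (g.app (op ⦋n + 1⦌) z) = g.app (op ⦋n⦌) (K.δ i z) := by
  have := NatTrans.naturality_apply g ((SimplexCategory.δ i).op) z
  simpa [SimplicialObject.δ] using this.symm

theorem σ_app (g : K ⟶ L) {n : ℕ} (i : Fin (n + 1)) (z : K _⦋n⦌) :
    L.σ i (g.app (op ⦋n⦌) z) = g.app (op ⦋n + 1⦌) (K.σ i z) := by
  have := NatTrans.naturality_apply g ((SimplexCategory.σ i).op) z
  simpa [SimplicialObject.σ] using this.symm

theorem bpt_app (g : K ⟶ L) (x : K _⦋0⦌) :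
    ∀ n : ℕ, g.app (op ⦋n⦌) (bpt K x n) = bpt L (g.app (op ⦋0⦌) x) n := fun n => match n with
  | 0 => rfl
  | n + 1 => by rw [bpt, bpt, ← bpt_app g x n, σ_app]

/-- The map `Zₙ(K, x) → Zₙ(L, g(x))` induced by `g : K ⟶ L`. -/
def szMap (g : K ⟶ L) (x : K _⦋0⦌) : ∀ n : ℕ, SZ K x n → SZ L (g.app (op ⦋0⦌) x) n := fun n z => match n, z with
  | 0, z => g.app (op ⦋0⦌) z
  | n + 1, z => ⟨g.app (op ⦋n + 1⦌) z.1, fun i => by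
      rw [δ_app, z.2 i, bpt_app]⟩

theorem szVal_szMap (g : K ⟶ L) (x : K _⦋0⦌) :
    ∀ (n : ℕ) (z : SZ K x n), szVal (szMap g x n z) = g.app (op ⦋n⦌) (szVal z) := fun n z => match n, z with
  | 0, _ => rfl
  | _ + 1, _ => rfl

/-- The map `πₙ(K, x) → πₙ(L, g(x))` induced by `g : K ⟶ L`. -/
def piMap (g : K ⟶ L) (x : K _⦋0⦌) (n : ℕ) :
    piSet K x n → piSet L (g.app (op ⦋0⦌) x) n :=
  Quot.map (szMap g x n) (by
    rintro z z' ⟨y, h1, h2, h3⟩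
    refine ⟨g.app (op ⦋n + 1⦌) y, fun i hi => by rw [δ_app, h1 i hi, bpt_app], ?_, ?_⟩
    · rw [δ_app, h2, szVal_szMap]
    · rw [δ_app, h3, szVal_szMap])

/-- `g : K ⟶ L` is a weak equivalence of simplicial sets: it induces bijections on
all homotopy groups at all basepoints. -/
def IsWeakEquivalenceSSet (g : K ⟶ L) : Prop :=
  ∀ (n : ℕ) (x : K _⦋0⦌), Function.Bijective (piMap g x n)


end SSetPart


section HMapPart
variable {C : Type u} [Category.{v} C] [HasZeroMorphisms C] [HasFiniteLimits C] [HasCokernels C]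

/-- The data of the morphisms induced by a simplicial morphism `f : A ⟶ B` on Moore
complexes, on cycles, and on homology; each component is uniquely determined by the
stated compatibility. -/
structure HMapData {A B : SimplicialObject C} (f : A ⟶ B) where
  ν : ∀ n : ℕ, Moore.NObj A n ⟶ Moore.NObj B n
  hν : ∀ n : ℕ, ν n ≫ (Moore.NSub B n).arrow = (Moore.NSub A n).arrow ≫ f.app (op ⦋n⦌)
  κ : ∀ n : ℕ, kernel (Moore.MooreD A n) ⟶ kernel (Moore.MooreD B n)
  hκ : ∀ n : ℕ, κ n ≫ kernel.ι (Moore.MooreD B n) = kernel.ι (Moore.MooreD A n) ≫ ν (n + 1)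
  η : ∀ n : ℕ, Moore.H A n ⟶ Moore.H B n
  hη₀ : cokernel.π (Moore.MooreD A 0) ≫ η 0 = ν 0 ≫ cokernel.π (Moore.MooreD B 0)
  hη : ∀ n : ℕ,
    cokernel.π (kernel.lift (Moore.MooreD A n) (Moore.MooreD A (n + 1)) (Moore.d_squared A n)) ≫
        η (n + 1) =
      κ n ≫
        cokernel.π (kernel.lift (Moore.MooreD B n) (Moore.MooreD B (n + 1)) (Moore.d_squared B n))

/-- `f` is a homology isomorphism. -/
def IsHomologyIso {A B : SimplicialObject C} (f : A ⟶ B) : Prop :=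
  ∀ d : HMapData f, ∀ n : ℕ, IsIso (d.η n)

end HMapPart


section Statement10Aux

variable {C : Type u} [Category.{v} C] [HasZeroMorphisms C] [HasFiniteLimits C]

lemma isRegEpi_of_section {E B : C} (p : E ⟶ B) (s : B ⟶ E) (hs : s ≫ p = 𝟙 B) :
    IsRegEpi p := by
  haveI : IsSplitEpi p := ⟨⟨⟨s, hs⟩⟩⟩
  exact ⟨RegularEpi.ofSplitEpi p⟩

/-- From the Short Five Lemma: the kernel and a section of a split epi are jointly
strongly epimorphic. -/
lemma jointly_strong [IsSemiAbelian C] {E B W : C} (p : E ⟶ B) (s : B ⟶ E)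
    (hs : s ≫ p = 𝟙 B) (w : W ⟶ E) [Mono w] (k' : kernel p ⟶ W)
    (hk : k' ≫ w = kernel.ι p) (s' : B ⟶ W) (hs' : s' ≫ w = s) : IsIso w := by
  have hp' : s' ≫ (w ≫ p) = 𝟙 B := by rw [← Category.assoc, hs', hs]
  set u : kernel (w ≫ p) ⟶ kernel p :=
    kernel.lift p (kernel.ι (w ≫ p) ≫ w) (by rw [Category.assoc]; exact kernel.condition _)
    with hu
  have huι : u ≫ kernel.ι p = kernel.ι (w ≫ p) ≫ w := kernel.lift_ι _ _ _
  set φ : kernel p ⟶ kernel (w ≫ p) :=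
    kernel.lift (w ≫ p) k' (by
      rw [← Category.assoc, hk]; exact kernel.condition p) with hφ
  have hφι : φ ≫ kernel.ι (w ≫ p) = k' := kernel.lift_ι _ _ _
  have huk : u ≫ k' = kernel.ι (w ≫ p) := by
    rw [← cancel_mono w, Category.assoc, hk, huι]
  haveI : IsIso u := by
    refine ⟨φ, ?_, ?_⟩
    · rw [← cancel_mono (kernel.ι (w ≫ p)), Category.assoc, hφι, huk, Category.id_comp]
    · rw [← cancel_mono (kernel.ι p), Category.assoc, huι, ← Category.assoc, hφι, hk,
        Category.id_comp]
  exact IsSemiAbelian.protomodular (w ≫ p) p (isRegEpi_of_section _ s' hp')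
    (isRegEpi_of_section p s hs) w (𝟙 B) (Category.comp_id _) u huι this inferInstance

/-- Regular epi – mono factorization of any morphism in a semi-abelian category. -/
lemma image_fact [IsSemiAbelian C] {X Y : C} (f : X ⟶ Y) :
    ∃ (I : C) (e : X ⟶ I) (m : I ⟶ Y), e ≫ m = f ∧ IsRegEpi e ∧ Mono m := by
  haveI := IsSemiAbelian.hasCoequalizersOfKernelPairs (C := C) f
  set p₁ := pullback.fst f f
  set p₂ := pullback.snd f f
  set e := coequalizer.π p₁ p₂ with he
  set m := coequalizer.desc f pullback.condition with hm
  have hef : e ≫ m = f := coequalizer.π_desc _ _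
  refine ⟨_, e, m, hef, ⟨Cofork.IsColimit.regularEpi (colimit.isColimit _)⟩, ?_⟩
  set q₁ := pullback.fst m m with hq₁
  set q₂ := pullback.snd m m with hq₂
  have hqm : q₁ ≫ m = q₂ ≫ m := pullback.condition
  -- the comparison map between the kernel pairs
  have hγw : (p₁ ≫ e) ≫ m = (p₂ ≫ e) ≫ m := by
    rw [Category.assoc, Category.assoc, hef]; exact pullback.condition
  set γ : pullback f f ⟶ pullback m m := pullback.lift (p₁ ≫ e) (p₂ ≫ e) hγw with hγ
  have hγ1 : γ ≫ q₁ = p₁ ≫ e := pullback.lift_fst _ _ _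
  have hγ2 : γ ≫ q₂ = p₂ ≫ e := pullback.lift_snd _ _ _
  -- first pullback of e
  set u₁ := pullback.fst e q₁ with hu₁
  set u₂ := pullback.snd e q₁ with hu₂
  have hu : u₁ ≫ e = u₂ ≫ q₁ := pullback.condition
  obtain ⟨ru₂⟩ := IsSemiAbelian.regularEpiPullbackStable e q₁ ⟨Cofork.IsColimit.regularEpi (colimit.isColimit _)⟩
  -- second pullback of e
  set v₁ := pullback.fst e (u₂ ≫ q₂) with hv₁
  set v₂ := pullback.snd e (u₂ ≫ q₂) with hv₂
  have hv : v₁ ≫ e = v₂ ≫ (u₂ ≫ q₂) := pullback.condition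
  obtain ⟨rv₂⟩ := IsSemiAbelian.regularEpiPullbackStable e (u₂ ≫ q₂) ⟨Cofork.IsColimit.regularEpi (colimit.isColimit _)⟩
  have hδw' : (v₂ ≫ u₁) ≫ (e ≫ m) = v₁ ≫ (e ≫ m) := by
    simp only [Category.assoc]
    rw [← Category.assoc u₁ e, hu, ← Category.assoc v₁ e, hv]
    simp only [Category.assoc, hqm]
  have hδw : (v₂ ≫ u₁) ≫ f = v₁ ≫ f := by rw [hef] at hδw'; exact hδw'
  set δ : pullback e (u₂ ≫ q₂) ⟶ pullback f f := pullback.lift (v₂ ≫ u₁) v₁ hδw with hδ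
  have hδ1 : δ ≫ p₁ = v₂ ≫ u₁ := pullback.lift_fst _ _ _
  have hδ2 : δ ≫ p₂ = v₁ := pullback.lift_snd _ _ _
  have hδγ : δ ≫ γ = v₂ ≫ u₂ := by
    apply pullback.hom_ext
    · show (δ ≫ γ) ≫ q₁ = (v₂ ≫ u₂) ≫ q₁
      rw [Category.assoc, hγ1, ← Category.assoc, hδ1, Category.assoc, hu, Category.assoc]
    · show (δ ≫ γ) ≫ q₂ = (v₂ ≫ u₂) ≫ q₂
      rw [Category.assoc, hγ2, ← Category.assoc, hδ2, hv, Category.assoc]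
  haveI hEu : Epi u₂ := by rw [hu₂]; exact RegularEpi.epi _ ru₂
  haveI hEv : Epi v₂ := by rw [hv₂]; exact RegularEpi.epi _ rv₂
  haveI : Epi (δ ≫ γ) := by rw [hδγ]; exact epi_comp _ _
  haveI : Epi γ := epi_of_epi δ γ
  have hq : q₁ = q₂ := by
    rw [← cancel_epi γ, hγ1, hγ2]
    exact coequalizer.condition _ _
  constructor
  intro T a b hab
  have := pullback.lift_fst a b hab (f := m) (g := m)
  rw [← this, ← hq₁, hq, hq₂]
  exact pullback.lift_snd a b hab

lemma isRegEpi_comp_iso {X Y Z : C} (e : X ⟶ Y) (m : Y ⟶ Z) (hre : IsRegEpi e)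
    [IsIso m] : IsRegEpi (e ≫ m) := by
  obtain ⟨re⟩ := hre
  haveI := RegularEpi.epi _ re
  have hw : re.left ≫ e ≫ m = re.right ≫ e ≫ m := by
    rw [← Category.assoc, re.w, Category.assoc]
  refine ⟨⟨re.W, re.left, re.right, hw, ?_⟩⟩
  have hfac : ∀ s : Cofork re.left re.right,
      (e ≫ m) ≫ inv m ≫ Cofork.IsColimit.desc re.isColimit s.π s.condition = s.π := by
    intro s
    have h1 : e ≫ Cofork.IsColimit.desc re.isColimit s.π s.condition = s.π := by
      simpa using Cofork.IsColimit.π_desc' re.isColimit s.π s.condition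
    rw [Category.assoc, IsIso.hom_inv_id_assoc]
    exact h1
  refine Cofork.IsColimit.mk _
    (fun s => inv m ≫ Cofork.IsColimit.desc re.isColimit s.π s.condition)
    (fun s => by simpa using hfac s) (fun s m' hm' => ?_)
  haveI : Epi (e ≫ m) := epi_comp _ _
  rw [← cancel_epi (e ≫ m), hfac s]
  simpa using hm'

/-- In a semi-abelian category: for a relation `(r₀, r₁) : I ↣ X × X`,
if `x R 0` and `0 R y` then `x R y` ("unitality"). -/
lemma sub_lemma [IsSemiAbelian C] {I X : C} (r₀ r₁ : I ⟶ X) [Mono (prod.lift r₀ r₁)]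
    (T : C) (x y : T ⟶ I) (hx : x ≫ r₁ = 0) (hy : y ≫ r₀ = 0) :
    ∃ z : T ⟶ I, z ≫ r₀ = x ≫ r₀ ∧ z ≫ r₁ = y ≫ r₁ := by
  set m := prod.lift r₀ r₁ with hm
  have hm1 : m ≫ prod.fst = r₀ := prod.lift_fst _ _
  have hm2 : m ≫ prod.snd = r₁ := prod.lift_snd _ _
  haveI hmono : Mono m := by rw [hm]; infer_instance
  set ζ : kernel r₁ ⨯ kernel r₀ ⟶ X ⨯ X :=
    prod.lift (prod.fst ≫ kernel.ι r₁ ≫ r₀) (prod.snd ≫ kernel.ι r₀ ≫ r₁) with hζ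
  have hζ1 : ζ ≫ prod.fst = prod.fst ≫ kernel.ι r₁ ≫ r₀ := prod.lift_fst _ _
  have hζ2 : ζ ≫ prod.snd = prod.snd ≫ kernel.ι r₀ ≫ r₁ := prod.lift_snd _ _
  have hkfac : kernel.ι (prod.snd : kernel r₁ ⨯ kernel r₀ ⟶ kernel r₀) ≫ ζ =
      (kernel.ι prod.snd ≫ prod.fst ≫ kernel.ι r₁) ≫ m := by
    apply Limits.prod.hom_ext
    · simp only [Category.assoc]; rw [hζ1, hm1]
    · simp only [Category.assoc]; rw [hζ2, hm2]
      rw [kernel.condition_assoc, zero_comp, kernel.condition, comp_zero, comp_zero]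
  have hsfac : (prod.lift (0 : kernel r₀ ⟶ kernel r₁) (𝟙 (kernel r₀))) ≫ ζ =
      kernel.ι r₀ ≫ m := by
    apply Limits.prod.hom_ext
    · simp only [Category.assoc]; rw [hζ1, hm1]
      rw [← Category.assoc, prod.lift_fst, zero_comp, kernel.condition]
    · simp only [Category.assoc]; rw [hζ2, hm2]
      rw [← Category.assoc, prod.lift_snd, Category.id_comp]
  haveI hiso : IsIso (pullback.fst ζ m) :=
    jointly_strong (prod.snd : kernel r₁ ⨯ kernel r₀ ⟶ kernel r₀)
      (prod.lift 0 (𝟙 _)) (prod.lift_snd _ _) (pullback.fst ζ m)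
      (pullback.lift (kernel.ι _) (kernel.ι _ ≫ prod.fst ≫ kernel.ι r₁) hkfac)
      (pullback.lift_fst _ _ _)
      (pullback.lift (prod.lift 0 (𝟙 _)) (kernel.ι r₀) hsfac)
      (pullback.lift_fst _ _ _)
  set τ : kernel r₁ ⨯ kernel r₀ ⟶ I := inv (pullback.fst ζ m) ≫ pullback.snd ζ m with hτdef
  have hτ : τ ≫ m = ζ := by
    rw [hτdef, Category.assoc, ← pullback.condition, ← Category.assoc, IsIso.inv_hom_id,
      Category.id_comp]
  have e0 : τ ≫ r₀ = prod.fst ≫ kernel.ι r₁ ≫ r₀ := by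
    have h := congrArg (fun q => q ≫ (prod.fst : X ⨯ X ⟶ X)) hτ
    simp only [Category.assoc] at h
    rw [hm1, hζ1] at h; exact h
  have e1 : τ ≫ r₁ = prod.snd ≫ kernel.ι r₀ ≫ r₁ := by
    have h := congrArg (fun q => q ≫ (prod.snd : X ⨯ X ⟶ X)) hτ
    simp only [Category.assoc] at h
    rw [hm2, hζ2] at h; exact h
  refine ⟨prod.lift (kernel.lift r₁ x hx) (kernel.lift r₀ y hy) ≫ τ, ?_, ?_⟩
  · rw [Category.assoc, e0, ← Category.assoc, prod.lift_fst, ← Category.assoc, kernel.lift_ι]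
  · rw [Category.assoc, e1, ← Category.assoc, prod.lift_snd, ← Category.assoc, kernel.lift_ι]

/-- In a semi-abelian category, every relation is difunctional. -/
lemma difu_lemma [IsSemiAbelian C] {I X : C} (r₀ r₁ : I ⟶ X) [Mono (prod.lift r₀ r₁)]
    (T : C) (t₁ t₂ t₃ : T ⟶ I) (h12 : t₁ ≫ r₁ = t₂ ≫ r₁) (h23 : t₂ ≫ r₀ = t₃ ≫ r₀) :
    ∃ t : T ⟶ I, t ≫ r₀ = t₁ ≫ r₀ ∧ t ≫ r₁ = t₃ ≫ r₁ := by
  set m := prod.lift r₀ r₁ with hm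
  have hm1 : m ≫ prod.fst = r₀ := prod.lift_fst _ _
  have hm2 : m ≫ prod.snd = r₁ := prod.lift_snd _ _
  haveI hmono : Mono m := by rw [hm]; infer_instance
  set a : pullback (pullback.snd r₁ r₁ ≫ r₀) r₀ ⟶ I :=
    pullback.fst (pullback.snd r₁ r₁ ≫ r₀) r₀ ≫ pullback.fst r₁ r₁ with ha
  set b : pullback (pullback.snd r₁ r₁ ≫ r₀) r₀ ⟶ I :=
    pullback.fst (pullback.snd r₁ r₁ ≫ r₀) r₀ ≫ pullback.snd r₁ r₁ with hb
  set c : pullback (pullback.snd r₁ r₁ ≫ r₀) r₀ ⟶ I :=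
    pullback.snd (pullback.snd r₁ r₁ ≫ r₀) r₀ with hc
  have hab : a ≫ r₁ = b ≫ r₁ := by
    rw [ha, hb, Category.assoc, Category.assoc, pullback.condition (f := r₁) (g := r₁)]
  have hbc : b ≫ r₀ = c ≫ r₀ := by
    rw [hb, hc, Category.assoc]; exact pullback.condition
  set θ : pullback (pullback.snd r₁ r₁ ≫ r₀) r₀ ⟶ X ⨯ X :=
    prod.lift (a ≫ r₀) (c ≫ r₁) with hθ
  have hθ1 : θ ≫ prod.fst = a ≫ r₀ := prod.lift_fst _ _
  have hθ2 : θ ≫ prod.snd = c ≫ r₁ := prod.lift_snd _ _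
  have hsw : (pullback.lift (𝟙 I) (𝟙 I) rfl) ≫ (pullback.snd r₁ r₁ ≫ r₀) = 𝟙 I ≫ r₀ := by
    rw [← Category.assoc, pullback.lift_snd]
  set σP : I ⟶ pullback (pullback.snd r₁ r₁ ≫ r₀) r₀ :=
    pullback.lift (pullback.lift (𝟙 I) (𝟙 I) rfl) (𝟙 I) hsw with hσP
  have hσa : σP ≫ a = 𝟙 I := by
    rw [ha, ← Category.assoc, pullback.lift_fst, pullback.lift_fst]
  have hσb : σP ≫ b = 𝟙 I := by
    rw [hb, ← Category.assoc, pullback.lift_fst, pullback.lift_snd]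
  have hσc : σP ≫ c = 𝟙 I := by rw [hc]; exact pullback.lift_snd _ _ _
  have hκb : kernel.ι b ≫ b = 0 := kernel.condition b
  have hx : (kernel.ι b ≫ a) ≫ r₁ = 0 := by
    rw [Category.assoc, hab, ← Category.assoc, hκb, zero_comp]
  have hy : (kernel.ι b ≫ c) ≫ r₀ = 0 := by
    rw [Category.assoc, ← hbc, ← Category.assoc, hκb, zero_comp]
  obtain ⟨z, hz0, hz1⟩ := sub_lemma r₀ r₁ _ (kernel.ι b ≫ a) (kernel.ι b ≫ c) hx hy
  have hkθ : kernel.ι b ≫ θ = z ≫ m := by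
    apply Limits.prod.hom_ext
    · simp only [Category.assoc]; rw [hθ1, hm1, hz0]
      simp only [ha, Category.assoc]
    · simp only [Category.assoc]; rw [hθ2, hm2, hz1]
      simp only [hc, Category.assoc]
  have hσθ : σP ≫ θ = 𝟙 I ≫ m := by
    apply Limits.prod.hom_ext
    · simp only [Category.assoc]; rw [hθ1, hm1, ← Category.assoc, hσa]
    · simp only [Category.assoc]; rw [hθ2, hm2, ← Category.assoc, hσc]
  haveI hiso : IsIso (pullback.fst θ m) :=
    jointly_strong b σP hσb (pullback.fst θ m)
      (pullback.lift (kernel.ι b) z hkθ) (pullback.lift_fst _ _ _)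
      (pullback.lift σP (𝟙 I) hσθ) (pullback.lift_fst _ _ _)
  set lam : pullback (pullback.snd r₁ r₁ ≫ r₀) r₀ ⟶ I :=
    inv (pullback.fst θ m) ≫ pullback.snd θ m with hlamdef
  have hlam : lam ≫ m = θ := by
    rw [hlamdef, Category.assoc, ← pullback.condition, ← Category.assoc, IsIso.inv_hom_id,
      Category.id_comp]
  have e0 : lam ≫ r₀ = a ≫ r₀ := by
    have h := congrArg (fun q => q ≫ (prod.fst : X ⨯ X ⟶ X)) hlam
    simp only [Category.assoc] at h
    rw [hm1, hθ1] at h; exact h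
  have e1 : lam ≫ r₁ = c ≫ r₁ := by
    have h := congrArg (fun q => q ≫ (prod.snd : X ⨯ X ⟶ X)) hlam
    simp only [Category.assoc] at h
    rw [hm2, hθ2] at h; exact h
  have hgw : (pullback.lift t₁ t₂ h12) ≫ (pullback.snd r₁ r₁ ≫ r₀) = t₃ ≫ r₀ := by
    rw [← Category.assoc, pullback.lift_snd, h23]
  refine ⟨pullback.lift (pullback.lift t₁ t₂ h12) t₃ hgw ≫ lam, ?_, ?_⟩
  · rw [Category.assoc, e0, ha, ← Category.assoc, ← Category.assoc, pullback.lift_fst,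
      pullback.lift_fst]
  · rw [Category.assoc, e1, hc, ← Category.assoc, pullback.lift_snd]

/-- The key lemma: if the only morphism coequalizing the two face maps is zero, then
`(∂₀, ∂₁)` is a regular epimorphism. -/
lemma regEpi_of_Q [IsSemiAbelian C] (A : SimplicialObject C)
    (hQ : ∀ (Y : C) (g : A _⦋0⦌ ⟶ Y), A.δ (0 : Fin 2) ≫ g = A.δ (1 : Fin 2) ≫ g → g = 0) :
    IsRegEpi (prod.lift (A.δ (0 : Fin 2)) (A.δ (1 : Fin 2))) := by
  obtain ⟨I, e, m, hef, hre, hm⟩ :=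
    image_fact (prod.lift (A.δ (0 : Fin 2)) (A.δ (1 : Fin 2)))
  haveI := hm
  have hmeq : prod.lift (m ≫ prod.fst) (m ≫ prod.snd) = m := by
    apply Limits.prod.hom_ext
    · rw [prod.lift_fst]
    · rw [prod.lift_snd]
  haveI hmono2 : Mono (prod.lift (m ≫ prod.fst) (m ≫ prod.snd)) := by rw [hmeq]; exact hm
  have her₀ : e ≫ m ≫ prod.fst = A.δ (0 : Fin 2) := by
    rw [← Category.assoc, hef, prod.lift_fst]
  have her₁ : e ≫ m ≫ prod.snd = A.δ (1 : Fin 2) := by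
    rw [← Category.assoc, hef, prod.lift_snd]
  have hσ0 : A.σ (0 : Fin 1) ≫ A.δ (0 : Fin 2) = 𝟙 _ := by
    simpa using SimplicialObject.δ_comp_σ_self (X := A) (i := (0 : Fin 1))
  have hσ1 : A.σ (0 : Fin 1) ≫ A.δ (1 : Fin 2) = 𝟙 _ := by
    simpa using SimplicialObject.δ_comp_σ_succ (X := A) (i := (0 : Fin 1))
  have hd0 : (A.σ (0 : Fin 1) ≫ e) ≫ m ≫ prod.fst = 𝟙 _ := by
    rw [Category.assoc, her₀]; exact hσ0
  have hd1 : (A.σ (0 : Fin 1) ≫ e) ≫ m ≫ prod.snd = 𝟙 _ := by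
    rw [Category.assoc, her₁]; exact hσ1
  -- apply exactness to the image relation
  obtain ⟨Yv, φ, hkp⟩ := IsSemiAbelian.exactEquivalenceRelations
    (m ≫ prod.fst) (m ≫ prod.snd)
    (fun {T} p q h0 h1 => by
      rw [← cancel_mono m]
      apply Limits.prod.hom_ext
      · rw [Category.assoc, Category.assoc]; exact h0
      · rw [Category.assoc, Category.assoc]; exact h1)
    (fun T => by
      constructor
      · intro x
        exact ⟨x ≫ (A.σ (0 : Fin 1) ≫ e), by rw [Category.assoc, hd0, Category.comp_id],
          by rw [Category.assoc, hd1, Category.comp_id]⟩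
      · intro x y h
        obtain ⟨t, ht0, ht1⟩ := h
        obtain ⟨t', ht'0, ht'1⟩ := difu_lemma (m ≫ prod.fst) (m ≫ prod.snd) T
          (y ≫ (A.σ (0 : Fin 1) ≫ e)) t (x ≫ (A.σ (0 : Fin 1) ≫ e))
          (by rw [Category.assoc, hd1, Category.comp_id, ht1])
          (by rw [Category.assoc, hd0, Category.comp_id, ht0])
        refine ⟨t', ?_, ?_⟩
        · rw [ht'0, Category.assoc, hd0, Category.comp_id]
        · rw [ht'1, Category.assoc, hd1, Category.comp_id]
      · intro x y z hxy hyz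
        obtain ⟨t, ht0, ht1⟩ := hxy
        obtain ⟨s, hs0, hs1⟩ := hyz
        obtain ⟨t', ht'0, ht'1⟩ := difu_lemma (m ≫ prod.fst) (m ≫ prod.snd) T
          t (y ≫ (A.σ (0 : Fin 1) ≫ e)) s
          (by rw [Category.assoc, hd1, Category.comp_id, ht1])
          (by rw [Category.assoc, hd0, Category.comp_id, hs0])
        exact ⟨t', by rw [ht'0, ht0], by rw [ht'1, hs1]⟩)
  -- the coequalizer of the kernel pair of φ is zero
  haveI := IsSemiAbelian.hasCoequalizersOfKernelPairs (C := C) φ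
  have hr0π : (m ≫ prod.fst) ≫ coequalizer.π (pullback.fst φ φ) (pullback.snd φ φ) =
      (m ≫ prod.snd) ≫ coequalizer.π (pullback.fst φ φ) (pullback.snd φ φ) := by
    calc (m ≫ prod.fst) ≫ coequalizer.π (pullback.fst φ φ) (pullback.snd φ φ)
        = (hkp.isoPullback.hom ≫ pullback.fst φ φ) ≫
            coequalizer.π (pullback.fst φ φ) (pullback.snd φ φ) := by
          rw [hkp.isoPullback_hom_fst]
      _ = (hkp.isoPullback.hom ≫ pullback.snd φ φ) ≫
            coequalizer.π (pullback.fst φ φ) (pullback.snd φ φ) := by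
          rw [Category.assoc, Category.assoc, coequalizer.condition]
      _ = (m ≫ prod.snd) ≫ coequalizer.π (pullback.fst φ φ) (pullback.snd φ φ) := by
          rw [hkp.isoPullback_hom_snd]
  have hδπ : A.δ (0 : Fin 2) ≫ coequalizer.π (pullback.fst φ φ) (pullback.snd φ φ) =
      A.δ (1 : Fin 2) ≫ coequalizer.π (pullback.fst φ φ) (pullback.snd φ φ) := by
    simp only [Category.assoc] at hr0π
    rw [← her₀, ← her₁]
    simp only [Category.assoc]
    rw [hr0π]
  have hπ0 : coequalizer.π (pullback.fst φ φ) (pullback.snd φ φ) = 0 := hQ _ _ hδπ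
  have hφ0 : φ = 0 := by
    rw [← coequalizer.π_desc (f := pullback.fst φ φ) (g := pullback.snd φ φ) φ
      pullback.condition, hπ0, zero_comp]
  -- hence the relation is the total relation and m is an iso
  have hw : (prod.fst : A _⦋0⦌ ⨯ A _⦋0⦌ ⟶ A _⦋0⦌) ≫ φ = prod.snd ≫ φ := by
    rw [hφ0, comp_zero, comp_zero]
  have htm : hkp.lift prod.fst prod.snd hw ≫ m = 𝟙 _ := by
    apply Limits.prod.hom_ext
    · rw [Category.assoc, Category.id_comp]
      exact hkp.lift_fst prod.fst prod.snd hw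
    · rw [Category.assoc, Category.id_comp]
      exact hkp.lift_snd prod.fst prod.snd hw
  haveI : IsIso m := by
    refine ⟨hkp.lift prod.fst prod.snd hw, ?_, htm⟩
    rw [← cancel_mono m, Category.assoc, htm, Category.comp_id, Category.id_comp]
  have := isRegEpi_comp_iso e m hre
  rwa [hef] at this

lemma delta_eq_of_ker [IsSemiAbelian C] (A : SimplicialObject C) {Y : C}
    (g : A _⦋0⦌ ⟶ Y)
    (hker : kernel.ι (A.δ (0 : Fin 2)) ≫ A.δ (1 : Fin 2) ≫ g = 0) :
    A.δ (0 : Fin 2) ≫ g = A.δ (1 : Fin 2) ≫ g := by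
  have hσ0 : A.σ (0 : Fin 1) ≫ A.δ (0 : Fin 2) = 𝟙 _ := by
    simpa using SimplicialObject.δ_comp_σ_self (X := A) (i := (0 : Fin 1))
  have hσ1 : A.σ (0 : Fin 1) ≫ A.δ (1 : Fin 2) = 𝟙 _ := by
    simpa using SimplicialObject.δ_comp_σ_succ (X := A) (i := (0 : Fin 1))
  have hkeq : kernel.ι (A.δ (0 : Fin 2)) ≫ A.δ (0 : Fin 2) ≫ g =
      kernel.ι (A.δ (0 : Fin 2)) ≫ A.δ (1 : Fin 2) ≫ g := by
    rw [hker, ← Category.assoc, kernel.condition, zero_comp]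
  have hseq : A.σ (0 : Fin 1) ≫ A.δ (0 : Fin 2) ≫ g =
      A.σ (0 : Fin 1) ≫ A.δ (1 : Fin 2) ≫ g := by
    rw [← Category.assoc, ← Category.assoc, hσ0, hσ1]
  haveI hiso := jointly_strong (A.δ (0 : Fin 2)) (A.σ (0 : Fin 1)) hσ0
    (equalizer.ι (A.δ (0 : Fin 2) ≫ g) (A.δ (1 : Fin 2) ≫ g))
    (equalizer.lift (kernel.ι _) hkeq) (equalizer.lift_ι _ _)
    (equalizer.lift (A.σ (0 : Fin 1)) hseq) (equalizer.lift_ι _ _)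
  rw [← cancel_epi (equalizer.ι (A.δ (0 : Fin 2) ≫ g) (A.δ (1 : Fin 2) ≫ g))]
  exact equalizer.condition _ _

lemma N1_arrow_δ0 (A : SimplicialObject C) :
    (Moore.NSub A 1).arrow ≫ A.δ (0 : Fin 2) = 0 := by
  simpa using Moore.arrow_comp_δ_castSucc A 0 (0 : Fin 1)

lemma kernel_ι_factors (A : SimplicialObject C) :
    ∃ k : kernel (A.δ (0 : Fin 2)) ⟶ (Moore.NObj A 1),
      k ≫ (Moore.NSub A 1).arrow = kernel.ι (A.δ (0 : Fin 2)) := by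
  have hfac : (Finset.univ.inf fun k : Fin 1 =>
      kernelSubobject (A.δ k.castSucc)).Factors (kernel.ι (A.δ (0 : Fin 2))) := by
    refine (finset_inf_factors _).mpr fun i _ => ?_
    apply kernelSubobject_factors
    have hi : i = 0 := Subsingleton.elim _ _
    subst hi
    simpa using kernel.condition (A.δ (0 : Fin 2))
  exact ⟨factorThru _ _ hfac, factorThru_arrow _ _ _⟩

end Statement10Aux


/-- For a simplicial object `A` in a semi-abelian category, `H₀A = 0` iff
`(∂₀, ∂₁) : A₁ ⟶ A₀ × A₀` is a regular epimorphism. -/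
theorem H0_zero_iff_lift_regular_epi
    {C : Type u} [Category.{v} C] [HasZeroMorphisms C] [HasFiniteLimits C] [IsSemiAbelian C]
    [HasCokernels C] (A : SimplicialObject C) :
    IsZero (Moore.H A 0) ↔
      IsRegEpi (prod.lift (A.δ (0 : Fin 2)) (A.δ (1 : Fin 2))) := by
  have hlast : (Fin.last 1) = (1 : Fin 2) := by decide
  constructor
  · -- `H₀ = 0` implies the comparison is a regular epi
    intro hz
    apply regEpi_of_Q
    intro Y g hg
    have hd : Moore.MooreD A 0 ≫ ((⊤ : Subobject (A _⦋0⦌)).arrow ≫ g) = 0 := by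
      show ((Moore.NSub A 1).arrow ≫ A.δ (Fin.last 1) ≫
        inv (⊤ : Subobject (A _⦋0⦌)).arrow) ≫ ((⊤ : Subobject (A _⦋0⦌)).arrow ≫ g) = 0
      simp only [Category.assoc, IsIso.inv_hom_id_assoc]
      rw [hlast, ← hg, ← Category.assoc, N1_arrow_δ0, zero_comp]
    have hzero : cokernel.desc (Moore.MooreD A 0) _ hd = 0 := hz.eq_of_src _ _
    have htop : (⊤ : Subobject (A _⦋0⦌)).arrow ≫ g = 0 := by
      have h := cokernel.π_desc (Moore.MooreD A 0) _ hd
      rw [hzero, comp_zero] at h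
      exact h.symm
    rw [← Category.id_comp g, ← IsIso.inv_hom_id (⊤ : Subobject (A _⦋0⦌)).arrow,
      Category.assoc, htop, comp_zero]
  · -- the converse
    intro hre
    obtain ⟨re⟩ := hre
    haveI := RegularEpi.epi _ re
    have hQ : ∀ (Y : C) (g : A _⦋0⦌ ⟶ Y),
        A.δ (0 : Fin 2) ≫ g = A.δ (1 : Fin 2) ≫ g → g = 0 := by
      intro Y g hg
      have h2 : (prod.fst : A _⦋0⦌ ⨯ A _⦋0⦌ ⟶ _) ≫ g = prod.snd ≫ g := by
        rw [← cancel_epi (prod.lift (A.δ (0 : Fin 2)) (A.δ (1 : Fin 2))),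
          ← Category.assoc, ← Category.assoc, prod.lift_fst, prod.lift_snd]
        exact hg
      calc g = (prod.lift (0 : A _⦋0⦌ ⟶ A _⦋0⦌) (𝟙 _) ≫ prod.snd) ≫ g := by
            rw [prod.lift_snd, Category.id_comp]
        _ = prod.lift 0 (𝟙 _) ≫ prod.fst ≫ g := by rw [Category.assoc, h2]
        _ = 0 := by rw [← Category.assoc, prod.lift_fst, zero_comp]
    obtain ⟨k0, hk0⟩ := kernel_ι_factors A
    have hcond : ((Moore.NSub A 1).arrow ≫ A.δ (Fin.last 1) ≫
        inv (⊤ : Subobject (A _⦋0⦌)).arrow) ≫ cokernel.π (Moore.MooreD A 0) = 0 :=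
      cokernel.condition (Moore.MooreD A 0)
    have harr1 : (Moore.NSub A 1).arrow ≫ A.δ (1 : Fin 2) ≫
        (inv (⊤ : Subobject (A _⦋0⦌)).arrow ≫ cokernel.π (Moore.MooreD A 0)) = 0 := by
      rw [← hlast]
      exact (congrArg (fun t => (Moore.NSub A 1).arrow ≫ t) (Category.assoc _ _ _).symm).trans ((Category.assoc _ _ _).symm.trans hcond)
    have hker : kernel.ι (A.δ (0 : Fin 2)) ≫ A.δ (1 : Fin 2) ≫
        (inv (⊤ : Subobject (A _⦋0⦌)).arrow ≫ cokernel.π (Moore.MooreD A 0)) = 0 := by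
      rw [← hk0]; exact (Category.assoc _ _ _).trans ((congrArg (fun t => k0 ≫ t) harr1).trans comp_zero)
    have heq := delta_eq_of_ker A _ hker
    have hg0 : (inv (⊤ : Subobject (A _⦋0⦌)).arrow ≫ cokernel.π (Moore.MooreD A 0)) = 0 :=
      hQ _ _ heq
    have hπ0 : cokernel.π (Moore.MooreD A 0) = 0 := by
      have h3 : (⊤ : Subobject (A _⦋0⦌)).arrow ≫
          (inv (⊤ : Subobject (A _⦋0⦌)).arrow ≫ cokernel.π (Moore.MooreD A 0)) =
          cokernel.π (Moore.MooreD A 0) := by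
        exact IsIso.hom_inv_id_assoc _ _
      rw [← h3, hg0, comp_zero]; rfl
    have hzz : IsZero (cokernel (Moore.MooreD A 0)) := by
      refine (IsZero.iff_id_eq_zero _).mpr ?_
      exact (cancel_epi (cokernel.π (Moore.MooreD A 0))).mp
        (by rw [Category.comp_id, comp_zero, hπ0])
    exact hzz

end SemiAbPaper
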